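/- arXiv:1801.10107 — 4 statements merged into one kernel-verified Lean document; each statement's English description precedes it below -/
import Mathlib

section
/- Let X be a standard Borel space, Q an analytic quasi-order on X, E_Q the equivalence relation defined by x E_Q y iff x Q y and y Q x, and E an analytic equivalence relation on X with E contained in E_Q. If for every Polish space Y and every analytic quasi-order P on Y there is an E-invariant Borel subset A ⊆ X such that P is Borel bi-reducible with the restriction of Q to A, then for every Polish space Y and every analytic equivalence relation D on Y there is an E-invariant Borel subset A ⊆ X such that D is Borel bi-reducible with the restriction of E_Q to A. (In other words, if (Q, E) is an invariantly universal quasi-order, then (E_Q, E) is an invariantly universal equivalence relation.) -/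
/-- A subset of a measurable (standard Borel) space is analytic if it is the projection of a
Borel subset of the product with a Polish space. -/
def IsAnalyticSet {X : Type*} [MeasurableSpace X] (S : Set X) : Prop :=
  ∃ (Z : Type) (tZ : TopologicalSpace Z), @PolishSpace Z tZ ∧
    ∃ B : Set (Z × X), @MeasurableSet (Z × X) (@Prod.instMeasurableSpace Z X (@borel Z tZ) _) B ∧
      S = Prod.snd '' B

/-- A binary relation is analytic if it is analytic as a subset of the product space. -/
def IsAnalyticRel {X : Type*} [MeasurableSpace X] (R : X → X → Prop) : Prop :=
  IsAnalyticSet {p : X × X | R p.1 p.2}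

/-- `P` Borel reduces to the restriction of `Q` to `A`: a Borel (measurable) map taking values
in `A` and witnessing `y P y' ↔ f y Q f y'`. -/
def ReducesToRestr {Y X : Type*} [MeasurableSpace Y] [MeasurableSpace X]
    (P : Y → Y → Prop) (Q : X → X → Prop) (A : Set X) : Prop :=
  ∃ f : Y → X, Measurable f ∧ (∀ y, f y ∈ A) ∧ ∀ y y', P y y' ↔ Q (f y) (f y')

/-- The restriction of `Q` to `A` Borel reduces to `P`. -/
def RestrReducesTo {Y X : Type*} [MeasurableSpace Y] [MeasurableSpace X]
    (P : Y → Y → Prop) (Q : X → X → Prop) (A : Set X) : Prop :=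
  ∃ g : A → Y, Measurable g ∧ ∀ a b : A, Q a.1 b.1 ↔ P (g a) (g b)

/-- `P` is Borel bi-reducible with the restriction of `Q` to `A`. -/
def BiReducibleRestr {Y X : Type*} [MeasurableSpace Y] [MeasurableSpace X]
    (P : Y → Y → Prop) (Q : X → X → Prop) (A : Set X) : Prop :=
  ReducesToRestr P Q A ∧ RestrReducesTo P Q A

/-- **If `(Q, E)` is an invariantly universal quasi-order, then `(E_Q, E)` is an invariantly
universal equivalence relation.** Here `X` is a standard Borel space, `Q` an analytic
quasi-order on `X`, `E_Q` the equivalence relation `x E_Q y ↔ x Q y ∧ y Q x`, and `E` an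
analytic equivalence subrelation of `E_Q`. -/
theorem invariantly_universal_quasi_order_to_equiv_relation
    (X : Type) [MeasurableSpace X] [StandardBorelSpace X]
    (Q : X → X → Prop) (hQrefl : Reflexive Q) (hQtrans : Transitive Q)
    (hQan : IsAnalyticRel Q)
    (E : X → X → Prop) (hE : Equivalence E) (hEan : IsAnalyticRel E)
    (hsub : ∀ x y, E x y → Q x y ∧ Q y x)
    (huniv : ∀ (Y : Type) [TopologicalSpace Y] [PolishSpace Y]
        [MeasurableSpace Y] [BorelSpace Y] (P : Y → Y → Prop),
        Reflexive P → Transitive P → IsAnalyticRel P →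
        ∃ A : Set X, MeasurableSet A ∧ (∀ x y, x ∈ A → E x y → y ∈ A) ∧
          BiReducibleRestr P Q A) :
    ∀ (Y : Type) [TopologicalSpace Y] [PolishSpace Y]
      [MeasurableSpace Y] [BorelSpace Y] (D : Y → Y → Prop),
      Equivalence D → IsAnalyticRel D →
      ∃ A : Set X, MeasurableSet A ∧ (∀ x y, x ∈ A → E x y → y ∈ A) ∧
        BiReducibleRestr D (fun x y => Q x y ∧ Q y x) A := by
  intro Y _ _ _ _ D hD hDan
  obtain ⟨A, hA, hinv, ⟨f, hf, hfA, hfred⟩, ⟨g, hg, hgred⟩⟩ :=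
    huniv Y D (fun y => hD.refl y) (fun _ _ _ h h' => hD.trans h h') hDan
  refine ⟨A, hA, hinv, ⟨f, hf, hfA, fun y y' => ?_⟩, ⟨g, hg, fun a b => ?_⟩⟩
  · constructor
    · intro h; exact ⟨(hfred y y').mp h, (hfred y' y).mp (hD.symm h)⟩
    · intro h; exact (hfred y y').mpr h.1
  · constructor
    · rintro ⟨h1, h2⟩; exact (hgred a b).mp h1
    · intro h; exact ⟨(hgred a b).mpr h, (hgred b a).mpr (hD.symm h)⟩
end

section
/- The isomorphism relation on countable graphs SPB reduces to the isomorphism relation on countable partial orders: there exists a Borel map f : X_Gr → X_PO such that for all g, g' ∈ X_Gr, g ≅_Gr g' if and only if f g ≅_PO f g', and for every g ∈ X_Gr the groups Aut(g) and Aut(f g) are isomorphic. -/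
/-- Codes for countable graphs on domain `ℕ`: the edge relation as a function `ℕ → ℕ → Bool`. -/
abbrev GCode : Type := ℕ → ℕ → Bool

/-- `g` codes a graph: symmetric and irreflexive. -/
def GCode.IsGraph (g : GCode) : Prop := (∀ m n, g m n = g n m) ∧ ∀ n, g n n = false

/-- `X_Gr`: the standard Borel space of (codes of) countable graphs. -/
def XGr : Set GCode := {g | g.IsGraph}

/-- Isomorphism of graph codes: a permutation of `ℕ` respecting the edge relations. -/
def GCode.Iso (g g' : GCode) : Prop := ∃ σ : Equiv.Perm ℕ, ∀ m n, g m n = g' (σ m) (σ n)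

/-- Embeddability of graph codes: an injection of `ℕ` respecting the edge relations. -/
def GCode.Emb (g g' : GCode) : Prop :=
  ∃ h : ℕ → ℕ, Function.Injective h ∧ ∀ m n, g m n = g' (h m) (h n)

/-- The automorphism group of a graph code: permutations of `ℕ` preserving the edge
relation. -/
def GCode.Aut (g : GCode) : Subgroup (Equiv.Perm ℕ) where
  carrier := {σ : Equiv.Perm ℕ | ∀ m n, g m n = g (σ m) (σ n)}
  one_mem' := fun _ _ => rfl
  mul_mem' := by
    intro σ τ hσ hτ m n
    simpa [Equiv.Perm.mul_apply] using (hτ m n).trans (hσ (τ m) (τ n))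
  inv_mem' := by
    intro σ hσ m n
    have := hσ (σ⁻¹ m) (σ⁻¹ n)
    simpa [Equiv.Perm.coe_inv, Equiv.apply_symm_apply] using this.symm

/-- Codes for countable partial orders on domain `ℕ`. -/
abbrev POCode : Type := ℕ → ℕ → Bool

/-- `r` codes a partial order: reflexive, antisymmetric and transitive. -/
def POCode.IsPO (r : POCode) : Prop :=
  (∀ a, r a a = true) ∧ (∀ a b, r a b = true → r b a = true → a = b) ∧
  (∀ a b c, r a b = true → r b c = true → r a c = true)

/-- `X_PO`: the standard Borel space of (codes of) countable partial orders. -/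
def XPO : Set POCode := {r | r.IsPO}

/-- Isomorphism of partial order codes. -/
def POCode.Iso (r r' : POCode) : Prop := ∃ σ : Equiv.Perm ℕ, ∀ a b, r a b = r' (σ a) (σ b)

/-- The automorphism group of a partial order code. -/
def POCode.Aut (r : POCode) : Subgroup (Equiv.Perm ℕ) where
  carrier := {σ : Equiv.Perm ℕ | ∀ a b, r a b = r (σ a) (σ b)}
  one_mem' := fun _ _ => rfl
  mul_mem' := by
    intro σ τ hσ hτ a b
    simpa [Equiv.Perm.mul_apply] using (hτ a b).trans (hσ (τ a) (τ b))
  inv_mem' := by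
    intro σ hσ a b
    have := hσ (σ⁻¹ a) (σ⁻¹ b)
    simpa [Equiv.Perm.coe_inv, Equiv.apply_symm_apply] using this.symm

namespace GPOred

/-- first component of the pair coded by an element `≡ 1 (mod 3)` -/
def pA (n : ℕ) : ℕ := (Nat.unpair (n / 3)).1
def pB (n : ℕ) : ℕ := (Nat.unpair (n / 3)).2

/-- The partial order associated to a graph code `g`. -/
def Rel (g : GCode) (x y : ℕ) : Prop :=
  x = y ∨
  (x % 3 = 0 ∧ y % 3 = 1 ∧ pA y < pB y ∧ (x / 3 = pA y ∨ x / 3 = pB y)) ∨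
  (x % 3 = 1 ∧ pA x < pB x ∧ g (pA x) (pB x) = true ∧ y % 3 = 2) ∨
  (x % 3 = 0 ∧ y % 3 = 2 ∧ ∃ w, g (x / 3) w = true) ∨
  (x % 3 = 1 ∧ ¬ pA x < pB x ∧ y % 3 = 2 ∧ x / 3 ≤ y / 3) ∨
  (x % 3 = 2 ∧ y % 3 = 2 ∧ x / 3 < y / 3)

open Classical in
noncomputable def F (g : GCode) : POCode := fun x y => decide (Rel g x y)

lemma F_eq_true {g : GCode} {x y : ℕ} : F g x y = true ↔ Rel g x y := by
  simp [F]

lemma F_eq_false {g : GCode} {x y : ℕ} : F g x y = false ↔ ¬ Rel g x y := by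
  simp [F]

lemma F_eq_F {g g' : GCode} {x y x' y' : ℕ} :
    F g x y = F g' x' y' ↔ (Rel g x y ↔ Rel g' x' y') := by
  unfold F; exact decide_eq_decide

lemma rel_refl (g : GCode) (x : ℕ) : Rel g x x := Or.inl rfl

lemma rel_antisymm {g : GCode} {x y : ℕ} (h1 : Rel g x y) (h2 : Rel g y x) : x = y := by
  rcases h1 with h1 | ⟨a1,a2,a3,a4⟩ | ⟨a1,a2,a3,a4⟩ | ⟨a1,a2,a3⟩ | ⟨a1,a2,a3,a4⟩ | ⟨a1,a2,a3⟩ <;>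
  rcases h2 with h2 | ⟨b1,b2,b3,b4⟩ | ⟨b1,b2,b3,b4⟩ | ⟨b1,b2,b3⟩ | ⟨b1,b2,b3,b4⟩ | ⟨b1,b2,b3⟩ <;>
    omega

lemma rel_trans {g : GCode} (hsym : ∀ m n, g m n = g n m) {x y z : ℕ}
    (h1 : Rel g x y) (h2 : Rel g y z) : Rel g x z := by
  rcases h1 with rfl | h1
  · exact h2
  rcases h2 with rfl | h2
  · exact Or.inr h1
  rcases h1 with ⟨a1,a2,a3,a4⟩ | ⟨a1,a2,a3,a4⟩ | ⟨a1,a2,a3⟩ | ⟨a1,a2,a3,a4⟩ | ⟨a1,a2,a3⟩ <;>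
  rcases h2 with ⟨b1,b2,b3,b4⟩ | ⟨b1,b2,b3,b4⟩ | ⟨b1,b2,b3⟩ | ⟨b1,b2,b3,b4⟩ | ⟨b1,b2,b3⟩
  -- x vertex, y pair; y pair, valid+edge, z chain
  · omega
  · refine Or.inr (Or.inr (Or.inr (Or.inl ⟨a1, b4, ?_⟩)))
    rcases a4 with h | h
    · exact ⟨pB y, by rw [h]; exact b3⟩
    · exact ⟨pA y, by rw [h, hsym]; exact b3⟩
  · omega
  · omega
  · omega
  · omega
  · omega
  · omega
  · omega
  · exact Or.inr (Or.inr (Or.inl ⟨a1, a2, a3, b2⟩))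
  · omega
  · omega
  · omega
  · omega
  · exact Or.inr (Or.inr (Or.inr (Or.inl ⟨a1, b2, a3⟩)))
  · omega
  · omega
  · omega
  · omega
  · exact Or.inr (Or.inr (Or.inr (Or.inr (Or.inl ⟨a1, a2, b2, by omega⟩))))
  · omega
  · omega
  · omega
  · omega
  · exact Or.inr (Or.inr (Or.inr (Or.inr (Or.inr ⟨a1, b2, by omega⟩))))


/-! ### First-order invariants of the poset -/

def Min (R : ℕ → ℕ → Prop) (x : ℕ) : Prop := ∀ y, R y x → y = x

def VtxP (R : ℕ → ℕ → Prop) (x : ℕ) : Prop :=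
  Min R x ∧ ∃ u v, R x u ∧ R x v ∧ ¬ R u v ∧ ¬ R v u

def ChainP (R : ℕ → ℕ → Prop) (x : ℕ) : Prop :=
  (∃ y, y ≠ x ∧ R y x) ∧ ∃ u, R u x ∧ Min R u ∧ ¬ VtxP R u

def EdgeP (R : ℕ → ℕ → Prop) (m' n' : ℕ) : Prop :=
  m' ≠ n' ∧ ∃ p, R m' p ∧ R n' p ∧ (∃ c, c ≠ p ∧ R p c) ∧
    ∀ v, VtxP R v → R v p → v = m' ∨ v = n'

lemma pA_one : pA 1 = 0 := by decide
lemma pB_one : pB 1 = 0 := by decide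

lemma rel_one_chain (g : GCode) {x : ℕ} (hx : x % 3 = 2) : Rel g 1 x := by
  refine Or.inr (Or.inr (Or.inr (Or.inr (Or.inl ⟨by omega, ?_, hx, by omega⟩))))
  rw [pA_one, pB_one]; omega

lemma pA_code (k : ℕ) : pA (3 * k + 1) = (Nat.unpair k).1 := by
  unfold pA; rw [show (3 * k + 1) / 3 = k from by omega]

lemma pB_code (k : ℕ) : pB (3 * k + 1) = (Nat.unpair k).2 := by
  unfold pB; rw [show (3 * k + 1) / 3 = k from by omega]

lemma pA_pair (a b : ℕ) : pA (3 * Nat.pair a b + 1) = a := by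
  rw [pA_code, Nat.unpair_pair]

lemma pB_pair (a b : ℕ) : pB (3 * Nat.pair a b + 1) = b := by
  rw [pB_code, Nat.unpair_pair]

/-- vertex below a pair containing it -/
lemma rel_vtx_pair (g : GCode) {a b v : ℕ} (hab : a < b) (hv : v = a ∨ v = b) :
    Rel g (3 * v) (3 * Nat.pair a b + 1) := by
  refine Or.inr (Or.inl ⟨by omega, by omega, ?_, ?_⟩) <;>
    rw [pA_pair, pB_pair] <;> [exact hab; omega]

lemma min_iff (g : GCode) (x : ℕ) :
    Min (Rel g) x ↔ (x % 3 = 0 ∨ (x % 3 = 1 ∧ ¬ pA x < pB x)) := by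
  constructor
  · intro hm
    by_contra hc
    push_neg at hc
    rcases (by omega : x % 3 = 0 ∨ x % 3 = 1 ∨ x % 3 = 2) with h0 | h1 | h2
    · exact hc.1 h0
    · -- valid pair: 3 * pA x is strictly below
      have hv : pA x < pB x := hc.2 h1
      have : Rel g (3 * pA x) x := Or.inr (Or.inl ⟨by omega, h1, hv, by omega⟩)
      have := hm _ this
      omega
    · have := hm 1 (rel_one_chain g h2)
      omega
  · intro hx y hy
    rcases hy with rfl | ⟨b1,b2,b3,b4⟩ | ⟨b1,b2,b3,b4⟩ | ⟨b1,b2,b3⟩ | ⟨b1,b2,b3,b4⟩ | ⟨b1,b2,b3⟩ <;>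
      first | rfl | omega | (exfalso; rcases hx with h | ⟨h, h'⟩ <;> first | omega | exact h' b3)

lemma vtxP_iff (g : GCode) (x : ℕ) : VtxP (Rel g) x ↔ x % 3 = 0 := by
  constructor
  · rintro ⟨hm, u, v, hxu, hxv, huv, hvu⟩
    rcases (min_iff g x).mp hm with h0 | ⟨h1, hinv⟩
    · exact h0
    exfalso
    -- x is junk: everything above x is x itself or a chain element
    have key : ∀ z, Rel g x z → z = x ∨ z % 3 = 2 := by
      intro z hz
      rcases hz with rfl | ⟨b1,b2,b3,b4⟩ | ⟨b1,b2,b3,b4⟩ | ⟨b1,b2,b3⟩ | ⟨b1,b2,b3,b4⟩ | ⟨b1,b2,b3⟩ <;>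
        first | exact Or.inl rfl | omega | exact (hinv b2).elim | exact Or.inr b2 |
          exact Or.inr b3
    rcases key u hxu with rfl | hu2
    · exact huv hxv
    rcases key v hxv with rfl | hv2
    · exact hvu hxu
    rcases (by omega : u / 3 < v / 3 ∨ v / 3 < u / 3 ∨ u = v) with h | h | rfl
    · exact huv (Or.inr (Or.inr (Or.inr (Or.inr (Or.inr ⟨hu2, hv2, h⟩)))))
    · exact hvu (Or.inr (Or.inr (Or.inr (Or.inr (Or.inr ⟨hv2, hu2, h⟩)))))
    · exact huv (Or.inl rfl)
  · intro h0
    refine ⟨(min_iff g x).mpr (Or.inl h0), 3 * Nat.pair (x / 3) (x / 3 + 1) + 1,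
      3 * Nat.pair (x / 3) (x / 3 + 2) + 1, ?_, ?_, ?_, ?_⟩
    · rw [show x = 3 * (x / 3) from by omega]
      exact rel_vtx_pair g (by omega) (Or.inl (by omega))
    · rw [show x = 3 * (x / 3) from by omega]
      exact rel_vtx_pair g (by omega) (Or.inl (by omega))
    · rintro (heq | ⟨b1,b2,b3,b4⟩ | ⟨b1,b2,b3,b4⟩ | ⟨b1,b2,b3⟩ | ⟨b1,b2,b3,b4⟩ | ⟨b1,b2,b3⟩) <;>
        first
        | omega
        | (have := (Nat.pair_eq_pair.mp (by omega :
            Nat.pair (x / 3) (x / 3 + 1) = Nat.pair (x / 3) (x / 3 + 2))); omega)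
    · rintro (heq | ⟨b1,b2,b3,b4⟩ | ⟨b1,b2,b3,b4⟩ | ⟨b1,b2,b3⟩ | ⟨b1,b2,b3,b4⟩ | ⟨b1,b2,b3⟩) <;>
        first
        | omega
        | (have := (Nat.pair_eq_pair.mp (by omega :
            Nat.pair (x / 3) (x / 3 + 2) = Nat.pair (x / 3) (x / 3 + 1))); omega)

lemma chainP_iff (g : GCode) (x : ℕ) : ChainP (Rel g) x ↔ x % 3 = 2 := by
  constructor
  · rintro ⟨⟨y, hyx, hy⟩, u, hux, hmu, hnv⟩
    have hxnm : ¬ Min (Rel g) x := fun hm => hyx (hm y hy)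
    rcases (by omega : x % 3 = 0 ∨ x % 3 = 1 ∨ x % 3 = 2) with h0 | h1 | h2
    · exact absurd ((min_iff g x).mpr (Or.inl h0)) hxnm
    · -- x is a pair (valid, else Min); everything below is a vertex or x itself
      have hv : pA x < pB x := by
        by_contra hvv
        exact hxnm ((min_iff g x).mpr (Or.inr ⟨h1, hvv⟩))
      rcases hux with rfl | ⟨b1,b2,b3,b4⟩ | ⟨b1,b2,b3,b4⟩ | ⟨b1,b2,b3⟩ | ⟨b1,b2,b3,b4⟩ | ⟨b1,b2,b3⟩
      · exact absurd hmu hxnm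
      · exact (hnv ((vtxP_iff g u).mpr b1)).elim
      · omega
      · omega
      · omega
      · omega
    · exact h2
  · intro h2
    refine ⟨⟨1, by omega, rel_one_chain g h2⟩, 1, rel_one_chain g h2,
      (min_iff g 1).mpr (Or.inr ⟨by omega, by rw [pA_one, pB_one]; omega⟩),
      fun hv => by have := (vtxP_iff g 1).mp hv; omega⟩

lemma rel_pair_chain (g : GCode) {a b c : ℕ} (hab : a < b) (hg : g a b = true)
    (hc : c % 3 = 2) : Rel g (3 * Nat.pair a b + 1) c := by
  refine Or.inr (Or.inr (Or.inl ⟨by omega, ?_, ?_, hc⟩)) <;> rw [pA_pair, pB_pair]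
  · exact hab
  · exact hg

/-- helper: one direction of the edge characterization, for sorted endpoints -/
lemma edgeP_of_edge {g : GCode} {a b : ℕ} (hab : a < b) (hg : g a b = true) :
    ∃ p, Rel g (3 * a) p ∧ Rel g (3 * b) p ∧ (∃ c, c ≠ p ∧ Rel g p c) ∧
      ∀ v, VtxP (Rel g) v → Rel g v p → v = 3 * a ∨ v = 3 * b := by
  refine ⟨3 * Nat.pair a b + 1, rel_vtx_pair g hab (Or.inl rfl),
    rel_vtx_pair g hab (Or.inr rfl), ⟨2, by omega, rel_pair_chain g hab hg (by omega)⟩, ?_⟩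
  intro v hv hvp
  have h0 : v % 3 = 0 := (vtxP_iff g v).mp hv
  rcases hvp with heq | ⟨b1,b2,b3,b4⟩ | ⟨b1,b2,b3,b4⟩ | ⟨b1,b2,b3⟩ | ⟨b1,b2,b3,b4⟩ | ⟨b1,b2,b3⟩ <;>
    try omega
  rw [pA_pair, pB_pair] at b4
  omega

lemma edge_iff {g : GCode} (hg : g.IsGraph) (m n : ℕ) :
    g m n = true ↔ EdgeP (Rel g) (3 * m) (3 * n) := by
  constructor
  · intro hmn
    have hne : m ≠ n := by
      rintro rfl; rw [hg.2 m] at hmn; exact Bool.false_ne_true hmn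
    refine ⟨by omega, ?_⟩
    rcases (by omega : m < n ∨ n < m) with h | h
    · exact edgeP_of_edge h hmn
    · obtain ⟨p, h1, h2, h3, h4⟩ := edgeP_of_edge h ((hg.1 n m).trans hmn)
      exact ⟨p, h2, h1, h3, fun v hv hvp => (h4 v hv hvp).symm⟩
  · rintro ⟨hne, p, hmp, hnp, ⟨c, hcp, hpc⟩, hall⟩
    have hmn : m ≠ n := by omega
    -- analyze what p can be
    rcases hmp with heq | ⟨b1,b2,b3,b4⟩ | ⟨b1,b2,b3,b4⟩ | ⟨b1,b2,b3⟩ | ⟨b1,b2,b3,b4⟩ | ⟨b1,b2,b3⟩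
    · -- p = 3 * m : then Rel (3n) (3m) between distinct vertices: impossible
      exfalso
      rcases hnp with heq2 | ⟨c1,c2,c3,c4⟩ | ⟨c1,c2,c3,c4⟩ | ⟨c1,c2,c3⟩ | ⟨c1,c2,c3,c4⟩ | ⟨c1,c2,c3⟩ <;>
        omega
    · -- p is a valid pair containing m
      have hn' : 3 * m / 3 = pA p ∨ 3 * m / 3 = pB p := b4
      have hnn : n = pA p ∨ n = pB p := by
        rcases hnp with heq2 | ⟨c1,c2,c3,c4⟩ | ⟨c1,c2,c3,c4⟩ | ⟨c1,c2,c3⟩ | ⟨c1,c2,c3,c4⟩ | ⟨c1,c2,c3⟩ <;>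
          omega
      -- edge relation on p from strict upper bound
      have hedge : g (pA p) (pB p) = true := by
        rcases hpc with heq2 | ⟨c1,c2,c3,c4⟩ | ⟨c1,c2,c3,c4⟩ | ⟨c1,c2,c3⟩ | ⟨c1,c2,c3,c4⟩ | ⟨c1,c2,c3⟩ <;>
          first | exact c3 | omega | exact (hcp rfl).elim
      have hm' : m = pA p ∨ m = pB p := by omega
      rcases hm' with rfl | rfl <;> rcases hnn with h | h <;> first | omega | (subst h; try exact hedge)
      · rw [hg.1]; exact hedge
    · omega
    · -- p is a chain element; use a neighbor of m
      rw [show 3 * m / 3 = m from by omega] at b3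
      obtain ⟨w, hw⟩ := b3
      have hwv : VtxP (Rel g) (3 * w) := (vtxP_iff g _).mpr (by omega)
      have hwp : Rel g (3 * w) p :=
        Or.inr (Or.inr (Or.inr (Or.inl ⟨by omega, b2, ⟨m, by
          rw [show 3 * w / 3 = w from by omega]
          exact (hg.1 w m).trans hw⟩⟩)))
      rcases hall (3 * w) hwv hwp with h | h
      · exfalso
        have hwm : w = m := by omega
        subst hwm
        rw [hg.2] at hw
        exact Bool.false_ne_true hw
      · have hwn : w = n := by omega
        subst hwn
        exact hw
    · omega
    · omega

/-! ### Transfer of invariants along isomorphisms -/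

section Transfer

variable {R R' : ℕ → ℕ → Prop} {τ : Equiv.Perm ℕ}

lemma h_inv (h : ∀ x y, R x y ↔ R' (τ x) (τ y)) :
    ∀ x y, R' x y ↔ R (τ⁻¹ x) (τ⁻¹ y) := by
  intro x y
  have := h (τ⁻¹ x) (τ⁻¹ y)
  simpa using this.symm

lemma min_transfer (h : ∀ x y, R x y ↔ R' (τ x) (τ y)) {x : ℕ} (hx : Min R x) : Min R' (τ x) := by
  intro y hy
  have : R (τ⁻¹ y) x := by
    have := h (τ⁻¹ y) x
    simpa [hy] using this.mpr (by simpa using hy)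
  have := hx _ this
  have : y = τ x := by
    have h2 := congrArg τ this
    simpa using h2
  exact this

lemma vtxP_transfer (h : ∀ x y, R x y ↔ R' (τ x) (τ y)) {x : ℕ} (hx : VtxP R x) : VtxP R' (τ x) := by
  obtain ⟨hm, u, v, h1, h2, h3, h4⟩ := hx
  exact ⟨min_transfer h hm, τ u, τ v, (h x u).mp h1, (h x v).mp h2,
    fun hc => h3 ((h u v).mpr hc), fun hc => h4 ((h v u).mpr hc)⟩

lemma chainP_transfer (h : ∀ x y, R x y ↔ R' (τ x) (τ y)) {x : ℕ} (hx : ChainP R x) : ChainP R' (τ x) := by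
  obtain ⟨⟨y, hyx, hy⟩, u, h1, h2, h3⟩ := hx
  refine ⟨⟨τ y, fun hc => hyx (τ.injective hc), (h y x).mp hy⟩,
    τ u, (h u x).mp h1, min_transfer h h2, fun hc => h3 ?_⟩
  have := vtxP_transfer (h_inv h) hc
  simpa using this

lemma edgeP_transfer (h : ∀ x y, R x y ↔ R' (τ x) (τ y)) {m' n' : ℕ} (hx : EdgeP R m' n') : EdgeP R' (τ m') (τ n') := by
  obtain ⟨hne, p, h1, h2, ⟨c, hc, h3⟩, h4⟩ := hx
  refine ⟨fun hcc => hne (τ.injective hcc), τ p, (h m' p).mp h1, (h n' p).mp h2,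
    ⟨τ c, fun hcc => hc (τ.injective hcc), (h p c).mp h3⟩, ?_⟩
  intro v hv hvp
  have hv' : VtxP R (τ⁻¹ v) := by
    have := vtxP_transfer (h_inv h) hv
    simpa using this
  have hvp' : R (τ⁻¹ v) p := by
    have := (h (τ⁻¹ v) p).mpr
    apply this
    simpa using hvp
  rcases h4 _ hv' hvp' with he | he
  · left; have := congrArg τ he; simpa using this
  · right; have := congrArg τ he; simpa using this

end Transfer

/-! ### The permutation induced on the poset by a graph permutation -/

def tau (σ : Equiv.Perm ℕ) (x : ℕ) : ℕ :=
  if x % 3 = 0 then 3 * σ (x / 3)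
  else if x % 3 = 1 ∧ pA x < pB x then
    3 * Nat.pair (min (σ (pA x)) (σ (pB x))) (max (σ (pA x)) (σ (pB x))) + 1
  else x

lemma tau_v {σ : Equiv.Perm ℕ} {x : ℕ} (hx : x % 3 = 0) : tau σ x = 3 * σ (x / 3) := by
  unfold tau; rw [if_pos hx]

lemma tau_p {σ : Equiv.Perm ℕ} {x : ℕ} (hx : x % 3 = 1) (hv : pA x < pB x) :
    tau σ x = 3 * Nat.pair (min (σ (pA x)) (σ (pB x))) (max (σ (pA x)) (σ (pB x))) + 1 := by
  unfold tau; rw [if_neg (by omega), if_pos ⟨hx, hv⟩]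

lemma tau_o {σ : Equiv.Perm ℕ} {x : ℕ} (hx : ¬ x % 3 = 0) (hv : ¬ (x % 3 = 1 ∧ pA x < pB x)) :
    tau σ x = x := by
  unfold tau; rw [if_neg hx, if_neg hv]

lemma tau_pair_code (σ : Equiv.Perm ℕ) {a b : ℕ} (hab : a < b) :
    tau σ (3 * Nat.pair a b + 1) =
      3 * Nat.pair (min (σ a) (σ b)) (max (σ a) (σ b)) + 1 := by
  rw [tau_p (by omega) (by rw [pA_pair, pB_pair]; exact hab), pA_pair, pB_pair]

lemma tau_tau (σ : Equiv.Perm ℕ) (x : ℕ) : tau σ⁻¹ (tau σ x) = x := by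
  rcases (by omega : x % 3 = 0 ∨ (x % 3 = 1 ∧ pA x < pB x) ∨
      (¬ x % 3 = 0 ∧ ¬ (x % 3 = 1 ∧ pA x < pB x))) with h0 | ⟨h1, hv⟩ | ⟨h1, h2⟩
  · rw [tau_v h0, tau_v (by omega), show 3 * σ (x / 3) / 3 = σ (x / 3) from by omega]
    simp; omega
  · set a := pA x with ha
    set b := pB x with hb
    have hne : σ a ≠ σ b := fun hc => by have := σ.injective hc; omega
    have hx3 : x = 3 * Nat.pair a b + 1 := by
      rw [ha, hb]
      have := Nat.pair_unpair (x / 3)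
      unfold pA pB
      omega
    rw [tau_p h1 hv, ← ha, ← hb]
    rcases (by omega : σ a < σ b ∨ σ b < σ a) with hs | hs
    · rw [min_eq_left hs.le, max_eq_right hs.le, tau_pair_code σ⁻¹ hs]
      simp only [Equiv.Perm.coe_inv, Equiv.symm_apply_apply]
      rw [min_eq_left hv.le, max_eq_right hv.le]
      omega
    · rw [min_eq_right hs.le, max_eq_left hs.le, tau_pair_code σ⁻¹ hs]
      simp only [Equiv.Perm.coe_inv, Equiv.symm_apply_apply]
      rw [min_comm, max_comm, min_eq_left hv.le, max_eq_right hv.le]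
      omega
  · rw [tau_o h1 h2, tau_o h1 h2]

/-- `tau σ` as a permutation. -/
def tauPerm (σ : Equiv.Perm ℕ) : Equiv.Perm ℕ :=
  ⟨tau σ, tau σ⁻¹, tau_tau σ, fun x => by
    have := tau_tau σ⁻¹ x
    simpa using this⟩

@[simp] lemma tauPerm_apply (σ : Equiv.Perm ℕ) (x : ℕ) : tauPerm σ x = tau σ x := rfl

lemma tau_one (x : ℕ) : tau 1 x = x := by
  rcases (by omega : x % 3 = 0 ∨ (x % 3 = 1 ∧ pA x < pB x) ∨
      (¬ x % 3 = 0 ∧ ¬ (x % 3 = 1 ∧ pA x < pB x))) with h0 | ⟨h1, hv⟩ | ⟨h1, h2⟩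
  · rw [tau_v h0]; simp; omega
  · rw [tau_p h1 hv]
    simp only [Equiv.Perm.one_apply]
    rw [min_eq_left hv.le, max_eq_right hv.le]
    have := Nat.pair_unpair (x / 3)
    unfold pA pB at *
    omega
  · rw [tau_o h1 h2]

lemma tau_mul (σ σ' : Equiv.Perm ℕ) (x : ℕ) : tau (σ * σ') x = tau σ (tau σ' x) := by
  rcases (by omega : x % 3 = 0 ∨ (x % 3 = 1 ∧ pA x < pB x) ∨
      (¬ x % 3 = 0 ∧ ¬ (x % 3 = 1 ∧ pA x < pB x))) with h0 | ⟨h1, hv⟩ | ⟨h1, h2⟩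
  · rw [tau_v h0, tau_v h0, tau_v (by omega : (3 * σ' (x / 3)) % 3 = 0),
      show 3 * σ' (x / 3) / 3 = σ' (x / 3) from by omega]
    simp
  · set a := pA x with ha
    set b := pB x with hb
    have hne : σ' a ≠ σ' b := fun hc => by have := σ'.injective hc; omega
    have hx3 : x = 3 * Nat.pair a b + 1 := by
      rw [ha, hb]
      have := Nat.pair_unpair (x / 3)
      unfold pA pB
      omega
    have hmul : ∀ v, (σ * σ') v = σ (σ' v) := fun v => rfl
    have hlt : min (σ' a) (σ' b) < max (σ' a) (σ' b) := by omega
    rw [hx3, tau_pair_code (σ * σ') hv, tau_pair_code σ' hv, tau_pair_code σ hlt]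
    rcases (by omega : σ' a < σ' b ∨ σ' b < σ' a) with hs | hs
    · rw [min_eq_left hs.le, max_eq_right hs.le]
      simp only [hmul]
    · rw [min_eq_right hs.le, max_eq_left hs.le]
      simp only [hmul]
      rw [min_comm, max_comm]
  · rw [tau_o h1 h2, tau_o h1 h2, tau_o h1 h2]

lemma tau_mod (σ : Equiv.Perm ℕ) (x : ℕ) : tau σ x % 3 = x % 3 := by
  rcases (by omega : x % 3 = 0 ∨ (x % 3 = 1 ∧ pA x < pB x) ∨
      (¬ x % 3 = 0 ∧ ¬ (x % 3 = 1 ∧ pA x < pB x))) with h0 | ⟨h1, hv⟩ | ⟨h1, h2⟩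
  · rw [tau_v h0]; omega
  · rw [tau_p h1 hv]; omega
  · rw [tau_o h1 h2]

/-- Forward direction: `tau σ` transports the relation. -/
lemma rel_tau_mp {g g' : GCode} (hg' : ∀ m n, g' m n = g' n m) {σ : Equiv.Perm ℕ}
    (hσ : ∀ m n, g m n = g' (σ m) (σ n)) {x y : ℕ} (hxy : Rel g x y) :
    Rel g' (tau σ x) (tau σ y) := by
  rcases hxy with rfl | ⟨a1,a2,a3,a4⟩ | ⟨a1,a2,a3,a4⟩ | ⟨a1,a2,a3⟩ | ⟨a1,a2,a3,a4⟩ | ⟨a1,a2,a3⟩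
  · exact rel_refl _ _
  · -- vertex below pair
    have hy : y = 3 * Nat.pair (pA y) (pB y) + 1 := by
      have := Nat.pair_unpair (y / 3); unfold pA pB; omega
    rw [tau_v a1, hy, tau_pair_code σ a3]
    have hne : σ (pA y) ≠ σ (pB y) := fun hc => by have := σ.injective hc; omega
    refine rel_vtx_pair g' (by omega) ?_
    rcases a4 with h | h <;> rw [h] <;> omega
  · -- valid edge pair below chain
    have hx : x = 3 * Nat.pair (pA x) (pB x) + 1 := by
      have := Nat.pair_unpair (x / 3); unfold pA pB; omega
    have hyc : tau σ y = y := tau_o (by omega) (by omega)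
    rw [hx, tau_pair_code σ a2, hyc]
    have hne : σ (pA x) ≠ σ (pB x) := fun hc => by have := σ.injective hc; omega
    refine rel_pair_chain g' (by omega) ?_ a4
    rcases (by omega : σ (pA x) < σ (pB x) ∨ σ (pB x) < σ (pA x)) with hs | hs
    · rw [min_eq_left hs.le, max_eq_right hs.le, ← hσ]; exact a3
    · rw [min_eq_right hs.le, max_eq_left hs.le, hg', ← hσ]; exact a3
  · -- vertex below chain
    obtain ⟨w, hw⟩ := a3
    have hyc : tau σ y = y := tau_o (by omega) (by omega)
    rw [tau_v a1, hyc]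
    refine Or.inr (Or.inr (Or.inr (Or.inl ⟨by omega, a2, σ w, ?_⟩)))
    rw [show 3 * σ (x / 3) / 3 = σ (x / 3) from by omega, ← hσ]
    exact hw
  · -- junk below chain
    rw [tau_o (by omega) (by omega), tau_o (by omega) (by omega)]
    exact Or.inr (Or.inr (Or.inr (Or.inr (Or.inl ⟨a1, a2, a3, a4⟩))))
  · rw [tau_o (by omega) (by omega), tau_o (by omega) (by omega)]
    exact Or.inr (Or.inr (Or.inr (Or.inr (Or.inr ⟨a1, a2, a3⟩))))

lemma rel_tau {g g' : GCode} (hg' : ∀ m n, g' m n = g' n m) {σ : Equiv.Perm ℕ}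
    (hσ : ∀ m n, g m n = g' (σ m) (σ n)) (x y : ℕ) :
    Rel g x y ↔ Rel g' (tau σ x) (tau σ y) := by
  constructor
  · exact rel_tau_mp hg' hσ
  · intro h
    have hσ' : ∀ m n, g' m n = g (σ⁻¹ m) (σ⁻¹ n) := by
      intro m n
      have := hσ (σ⁻¹ m) (σ⁻¹ n)
      simpa using this.symm
    have hg2 : ∀ m n, g m n = g n m := by
      intro m n
      rw [hσ m n, hσ n m, hg']
    have := rel_tau_mp (g' := g) hg2 hσ' h
    rwa [tau_tau, tau_tau] at this

section Extract

variable {g g' : GCode} {τ : Equiv.Perm ℕ}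

lemma vertex_image (h : ∀ x y, Rel g x y ↔ Rel g' (τ x) (τ y)) (v : ℕ) :
    (τ (3 * v)) % 3 = 0 := by
  have h1 : VtxP (Rel g) (3 * v) := (vtxP_iff g _).mpr (by omega)
  exact (vtxP_iff g' _).mp (vtxP_transfer h h1)

/-- The graph permutation extracted from a poset isomorphism. -/
noncomputable def sigmaOf (τ : Equiv.Perm ℕ) (hτ : ∀ v, (τ (3 * v)) % 3 = 0)
    (hτ' : ∀ v, (τ⁻¹ (3 * v)) % 3 = 0) : Equiv.Perm ℕ where
  toFun v := τ (3 * v) / 3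
  invFun v := τ⁻¹ (3 * v) / 3
  left_inv v := by
    have h1 := hτ v
    show τ⁻¹ (3 * (τ (3 * v) / 3)) / 3 = v
    rw [show 3 * (τ (3 * v) / 3) = τ (3 * v) from by omega]
    simp
  right_inv v := by
    have h1 := hτ' v
    show τ (3 * (τ⁻¹ (3 * v) / 3)) / 3 = v
    rw [show 3 * (τ⁻¹ (3 * v) / 3) = τ⁻¹ (3 * v) from by omega]
    simp

lemma extract (hg : g.IsGraph) (hg' : g'.IsGraph)
    (h : ∀ x y, Rel g x y ↔ Rel g' (τ x) (τ y)) :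
    ∃ σ : Equiv.Perm ℕ, (∀ v, τ (3 * v) = 3 * σ v) ∧ ∀ m n, g m n = g' (σ m) (σ n) := by
  have hτ : ∀ v, (τ (3 * v)) % 3 = 0 := vertex_image h
  have hτ' : ∀ v, (τ⁻¹ (3 * v)) % 3 = 0 := vertex_image (h_inv h)
  refine ⟨sigmaOf τ hτ hτ', fun v => by have := hτ v; simp [sigmaOf]; omega, ?_⟩
  intro m n
  have hv : ∀ v, τ (3 * v) = 3 * (sigmaOf τ hτ hτ' v) := fun v => by
    have := hτ v; simp [sigmaOf]; omega
  rw [Bool.eq_iff_iff, edge_iff hg m n, edge_iff hg' _ _]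
  constructor
  · intro he
    have := edgeP_transfer h he
    rwa [hv, hv] at this
  · intro he
    have h2 := edgeP_transfer (h_inv h) he
    rw [← hv, ← hv] at h2
    simpa using h2

/-- Any self-isomorphism fixes the chain pointwise. -/
lemma chain_fixed (h : ∀ x y, Rel g x y ↔ Rel g' (τ x) (τ y)) (j : ℕ) :
    τ (3 * j + 2) = 3 * j + 2 := by
  have hmod : ∀ i, τ (3 * i + 2) % 3 = 2 := fun i =>
    (chainP_iff g' _).mp (chainP_transfer h ((chainP_iff g _).mpr (by omega)))
  have hmod' : ∀ i, τ⁻¹ (3 * i + 2) % 3 = 2 := fun i =>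
    (chainP_iff g _).mp (chainP_transfer (h_inv h) ((chainP_iff g' _).mpr (by omega)))
  set e : ℕ → ℕ := fun i => τ (3 * i + 2) / 3 with he
  set e' : ℕ → ℕ := fun i => τ⁻¹ (3 * i + 2) / 3 with he'
  have hchainlt : ∀ {R : ℕ → ℕ → Prop} {gg : GCode}, R = Rel gg →
      ∀ {u v : ℕ}, u % 3 = 2 → v % 3 = 2 → u ≠ v → R u v → u / 3 < v / 3 := by
    rintro R gg rfl u v hu hv huv hr
    rcases hr with rfl | ⟨b1,b2,b3,b4⟩ | ⟨b1,b2,b3,b4⟩ | ⟨b1,b2,b3⟩ | ⟨b1,b2,b3,b4⟩ | ⟨b1,b2,b3⟩ <;>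
      omega
  have hse : StrictMono e := by
    intro i j hij
    have hr : Rel g (3 * i + 2) (3 * j + 2) :=
      Or.inr (Or.inr (Or.inr (Or.inr (Or.inr ⟨by omega, by omega, by omega⟩))))
    have hr' := (h _ _).mp hr
    have hne : τ (3 * i + 2) ≠ τ (3 * j + 2) := fun hc => by
      have := τ.injective hc; omega
    exact hchainlt rfl (hmod i) (hmod j) hne hr'
  have hse' : StrictMono e' := by
    intro i j hij
    have hr : Rel g' (3 * i + 2) (3 * j + 2) :=
      Or.inr (Or.inr (Or.inr (Or.inr (Or.inr ⟨by omega, by omega, by omega⟩))))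
    have hr' := (h_inv h _ _).mp hr
    have hne : τ⁻¹ (3 * i + 2) ≠ τ⁻¹ (3 * j + 2) := fun hc => by
      have := τ⁻¹.injective hc; omega
    exact hchainlt rfl (hmod' i) (hmod' j) hne hr'
  have hee : ∀ i, e' (e i) = i := by
    intro i
    have h1 := hmod i
    simp only [he, he']
    rw [show 3 * (τ (3 * i + 2) / 3) + 2 = τ (3 * i + 2) from by omega]
    simp
    omega
  have hej : e j = j := by
    have h1 : j ≤ e j := hse.le_apply
    have h2 : e j ≤ e' (e j) := hse'.le_apply
    rw [hee j] at h2
    omega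
  have := hmod j
  simp only [he] at hej
  omega

end Extract

lemma tau_det {g g' : GCode} {τ : Equiv.Perm ℕ}
    (h : ∀ x y, Rel g x y ↔ Rel g' (τ x) (τ y)) {σ : Equiv.Perm ℕ}
    (hv : ∀ v, τ (3 * v) = 3 * σ v) (x : ℕ) : τ x = tau σ x := by
  rcases (by omega : x % 3 = 0 ∨ (x % 3 = 1 ∧ pA x < pB x) ∨
      (x % 3 = 1 ∧ ¬ pA x < pB x) ∨ x % 3 = 2) with h0 | ⟨h1, hvv⟩ | ⟨h1, hvv⟩ | h2
  · rw [tau_v h0, ← hv, show 3 * (x / 3) = x from by omega]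
  · -- valid pair
    set a := pA x with ha
    set b := pB x with hb
    have hx3 : x = 3 * Nat.pair a b + 1 := by
      rw [ha, hb]
      have := Nat.pair_unpair (x / 3)
      unfold pA pB
      omega
    have hra : Rel g (3 * a) x := by
      rw [hx3]; exact rel_vtx_pair g hvv (Or.inl rfl)
    have hrb : Rel g (3 * b) x := by
      rw [hx3]; exact rel_vtx_pair g hvv (Or.inr rfl)
    have hra' : Rel g' (3 * σ a) (τ x) := by rw [← hv]; exact (h _ _).mp hra
    have hrb' : Rel g' (3 * σ b) (τ x) := by rw [← hv]; exact (h _ _).mp hrb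
    have hne : σ a ≠ σ b := fun hc => by have := σ.injective hc; omega
    -- τ x is not a chain element
    have hnc : ¬ τ x % 3 = 2 := by
      intro hc
      have h3 : ChainP (Rel g) x := by
        have := chainP_transfer (h_inv h) ((chainP_iff g' (τ x)).mpr hc)
        simpa using this
      have := (chainP_iff g x).mp h3
      omega
    -- τ x is not a vertex
    have hnv : ¬ τ x % 3 = 0 := by
      intro hc
      -- then 3 σ a and 3 σ b are distinct vertices both below the vertex τ x
      rcases hra' with heq | ⟨c1,c2,c3,c4⟩ | ⟨c1,c2,c3,c4⟩ | ⟨c1,c2,c3⟩ | ⟨c1,c2,c3,c4⟩ | ⟨c1,c2,c3⟩ <;>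
        try omega
      rcases hrb' with heq2 | ⟨d1,d2,d3,d4⟩ | ⟨d1,d2,d3,d4⟩ | ⟨d1,d2,d3⟩ | ⟨d1,d2,d3,d4⟩ | ⟨d1,d2,d3⟩ <;>
        omega
    have hmod1 : τ x % 3 = 1 := by omega
    -- from hra', hrb' : τ x is a pair with endpoints σ a and σ b
    have hea : σ a = pA (τ x) ∨ σ a = pB (τ x) := by
      rcases hra' with heq | ⟨c1,c2,c3,c4⟩ | ⟨c1,c2,c3,c4⟩ | ⟨c1,c2,c3⟩ | ⟨c1,c2,c3,c4⟩ | ⟨c1,c2,c3⟩ <;>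
        omega
    have heb : σ b = pA (τ x) ∨ σ b = pB (τ x) := by
      rcases hrb' with heq | ⟨c1,c2,c3,c4⟩ | ⟨c1,c2,c3,c4⟩ | ⟨c1,c2,c3⟩ | ⟨c1,c2,c3,c4⟩ | ⟨c1,c2,c3⟩ <;>
        omega
    have hvalid : pA (τ x) < pB (τ x) := by
      rcases hra' with heq | ⟨c1,c2,c3,c4⟩ | ⟨c1,c2,c3,c4⟩ | ⟨c1,c2,c3⟩ | ⟨c1,c2,c3,c4⟩ | ⟨c1,c2,c3⟩ <;>
        omega
    have hAmin : pA (τ x) = min (σ a) (σ b) := by omega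
    have hBmax : pB (τ x) = max (σ a) (σ b) := by omega
    have htx : τ x = 3 * Nat.pair (pA (τ x)) (pB (τ x)) + 1 := by
      have := Nat.pair_unpair (τ x / 3)
      unfold pA pB
      omega
    rw [htx, hAmin, hBmax, hx3, tau_pair_code σ hvv]
  · -- junk element
    have hjx : Min (Rel g) x := (min_iff g x).mpr (Or.inr ⟨h1, hvv⟩)
    have hj1 : Min (Rel g') (τ x) := min_transfer h hjx
    have hj2 : ¬ VtxP (Rel g') (τ x) := by
      intro hc
      have := vtxP_transfer (h_inv h) hc
      simp only [Equiv.Perm.coe_inv, Equiv.symm_apply_apply] at this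
      have := (vtxP_iff g x).mp this
      omega
    have hj3 : τ x % 3 = 1 ∧ ¬ pA (τ x) < pB (τ x) := by
      rcases (min_iff g' (τ x)).mp hj1 with hh | hh
      · exact absurd ((vtxP_iff g' (τ x)).mpr hh) hj2
      · exact hh
    set k := x / 3 with hk
    have hxk : x = 3 * k + 1 := by omega
    -- R x (3k+2), transported
    have hr1 : Rel g x (3 * k + 2) :=
      Or.inr (Or.inr (Or.inr (Or.inr (Or.inl ⟨h1, hvv, by omega, by omega⟩))))
    have hr1' := (h _ _).mp hr1
    rw [chain_fixed h k] at hr1'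
    have hle1 : τ x / 3 ≤ k := by
      rcases hr1' with heq | ⟨c1,c2,c3,c4⟩ | ⟨c1,c2,c3,c4⟩ | ⟨c1,c2,c3⟩ | ⟨c1,c2,c3,c4⟩ | ⟨c1,c2,c3⟩ <;>
        first | omega | exact absurd c2 hj3.2
    -- R' (τ x) (3 (τx/3) + 2), transported back
    have hr2 : Rel g' (τ x) (3 * (τ x / 3) + 2) :=
      Or.inr (Or.inr (Or.inr (Or.inr (Or.inl ⟨hj3.1, hj3.2, by omega, by omega⟩))))
    have hr2' := (h_inv h _ _).mp hr2
    have hcf : τ⁻¹ (3 * (τ x / 3) + 2) = 3 * (τ x / 3) + 2 := by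
      have hinv2 : ∀ a b, Rel g' a b ↔ Rel g (τ⁻¹ a) (τ⁻¹ b) := h_inv h
      exact chain_fixed hinv2 (τ x / 3)
    rw [hcf] at hr2'
    simp only [Equiv.Perm.coe_inv, Equiv.symm_apply_apply] at hr2'
    have hle2 : k ≤ τ x / 3 := by
      rcases hr2' with heq | ⟨c1,c2,c3,c4⟩ | ⟨c1,c2,c3,c4⟩ | ⟨c1,c2,c3⟩ | ⟨c1,c2,c3,c4⟩ | ⟨c1,c2,c3⟩ <;>
        first | omega | exact absurd c2 hvv
    rw [tau_o (by omega) (by omega)]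
    omega
  · rw [tau_o (by omega) (by omega), show x = 3 * (x / 3) + 2 from by omega]
    exact chain_fixed h (x / 3)

/-! ### Measurability -/

section Meas

lemma hcoord (a b : ℕ) : MeasurableSet {g : {g : GCode // g ∈ XGr} | g.1 a b = true} := by
  have hm1 : Measurable fun g : {g : GCode // g ∈ XGr} => g.1 a :=
    (measurable_pi_apply a).comp measurable_subtype_coe
  have hm : Measurable fun g : {g : GCode // g ∈ XGr} => g.1 a b :=
    (measurable_pi_apply b).comp hm1
  exact hm (measurableSet_singleton true)

lemma hconst (p : Prop) : MeasurableSet {g : {g : GCode // g ∈ XGr} | p} := by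
  by_cases hp : p <;> simp [hp]

lemma relSet_measurable (x y : ℕ) :
    MeasurableSet {g : {g : GCode // g ∈ XGr} | Rel g.1 x y} := by
  simp only [Rel, Set.setOf_or, Set.setOf_and, Set.setOf_exists]
  repeat
    first
    | exact hcoord _ _
    | exact hconst _
    | apply MeasurableSet.union
    | apply MeasurableSet.inter
    | (apply MeasurableSet.iUnion; intro w)

lemma F_measurable : Measurable (fun g : {g : GCode // g ∈ XGr} => F g.1) := by
  apply measurable_pi_lambda
  intro x
  apply measurable_pi_lambda
  intro y
  apply measurable_to_countable'
  intro b
  cases b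
  · have : (fun g : {g : GCode // g ∈ XGr} => F g.1 x y) ⁻¹' {false} =
        {g : {g : GCode // g ∈ XGr} | Rel g.1 x y}ᶜ := by
      ext g
      simp [F_eq_false, Set.mem_compl_iff]
    rw [this]
    exact (relSet_measurable x y).compl
  · have : (fun g : {g : GCode // g ∈ XGr} => F g.1 x y) ⁻¹' {true} =
        {g : {g : GCode // g ∈ XGr} | Rel g.1 x y} := by
      ext g
      simp [F_eq_true]
    rw [this]
    exact relSet_measurable x y

end Meas

end GPOred


open GPOred in
/-- **The isomorphism relation on countable graphs SPB reduces to the isomorphism relation on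
countable partial orders**: a Borel reduction which moreover preserves automorphism
groups. -/
theorem graphs_spb_reduces_to_partial_orders
    : ∃ f : {g : GCode // g ∈ XGr} → POCode, Measurable f ∧
      (∀ g, f g ∈ XPO) ∧
      (∀ g g', GCode.Iso g.1 g'.1 ↔ POCode.Iso (f g) (f g')) ∧
      (∀ g, Nonempty (GCode.Aut g.1 ≃* POCode.Aut (f g))) := by

  refine ⟨fun g => F g.1, F_measurable, ?_, ?_, ?_⟩
  · -- partial order axioms
    intro g
    have hg : g.1.IsGraph := g.2
    exact ⟨fun a => F_eq_true.mpr (rel_refl _ _),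
      fun a b h1 h2 => rel_antisymm (F_eq_true.mp h1) (F_eq_true.mp h2),
      fun a b c h1 h2 => F_eq_true.mpr (rel_trans hg.1 (F_eq_true.mp h1) (F_eq_true.mp h2))⟩
  · -- isomorphism correspondence
    intro g g'
    have hg : g.1.IsGraph := g.2
    have hg' : g'.1.IsGraph := g'.2
    constructor
    · rintro ⟨σ, hσ⟩
      exact ⟨tauPerm σ, fun x y => F_eq_F.mpr (rel_tau hg'.1 hσ x y)⟩
    · rintro ⟨τ, hτ⟩
      have h : ∀ x y, Rel g.1 x y ↔ Rel g'.1 (τ x) (τ y) := fun x y => F_eq_F.mp (hτ x y)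
      obtain ⟨σ, -, hσ⟩ := extract hg hg' h
      exact ⟨σ, hσ⟩
  · -- automorphism groups
    intro g
    have hg : g.1.IsGraph := g.2
    have hmem : ∀ σ : GCode.Aut g.1, tauPerm σ.1 ∈ POCode.Aut (F g.1) := by
      intro σ
      exact fun x y => F_eq_F.mpr (rel_tau hg.1 σ.2 x y)
    let φ : GCode.Aut g.1 →* POCode.Aut (F g.1) :=
      MonoidHom.mk' (fun σ => ⟨tauPerm σ.1, hmem σ⟩) (by
        intro σ σ'
        apply Subtype.ext
        apply Equiv.ext
        intro x
        exact tau_mul σ.1 σ'.1 x)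
    have hinj : Function.Injective φ := by
      intro σ σ' hss
      have h3 : ∀ x, tau σ.1 x = tau σ'.1 x := fun x =>
        congrArg (fun e : POCode.Aut (F g.1) => (e : Equiv.Perm ℕ) x) hss
      apply Subtype.ext
      apply Equiv.ext
      intro v
      have h4 := h3 (3 * v)
      rw [tau_v (by omega), tau_v (by omega), show 3 * v / 3 = v from by omega] at h4
      omega
    have hsurj : Function.Surjective φ := by
      intro τ
      have h : ∀ x y, Rel g.1 x y ↔ Rel g.1 (τ.1 x) (τ.1 y) := fun x y => F_eq_F.mp (τ.2 x y)
      obtain ⟨σ, hv, hσ⟩ := extract hg hg h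
      refine ⟨⟨σ, hσ⟩, ?_⟩
      apply Subtype.ext
      apply Equiv.ext
      intro x
      exact (tau_det h hv x).symm
    exact ⟨MulEquiv.ofBijective φ ⟨hinj, hsurj⟩⟩
end

section
/- Every countably infinite group has a nontrivial automorphism: if G is a group that is countable and infinite, then there exists a group automorphism φ : G → G with φ ≠ id. -/
/-- **Every countably infinite group has a nontrivial automorphism**: if `G` is a countable
infinite group, there is a group automorphism of `G` different from the identity. -/
theorem countably_infinite_group_has_nontrivial_automorphism
    (G : Type) [Group G] [Countable G] [Infinite G] :
    ∃ φ : G ≃* G, ⇑φ ≠ id := by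
  classical
  by_cases hcomm : ∀ a b : G, a * b = b * a
  · by_cases hinv : ∀ x : G, x * x = 1
    · -- elementary abelian 2-group: view as vector space over ZMod 2
      letI : AddCommGroup (Additive G) :=
        { (inferInstance : AddGroup (Additive G)) with
          add_comm := fun a b => hcomm a b }
      letI : Module (ZMod 2) (Additive G) := AddCommGroup.zmodModule (by
        intro x
        show (2 : ℕ) • x = 0
        rw [two_nsmul]
        exact hinv x.toMul)
      set b := Module.Basis.ofVectorSpace (ZMod 2) (Additive G) with hb
      haveI : Infinite (Module.Basis.ofVectorSpaceIndex (ZMod 2) (Additive G)) := by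
        by_contra hfin
        rw [not_infinite_iff_finite] at hfin
        haveI : Finite (Module.Basis.ofVectorSpaceIndex (ZMod 2) (Additive G) →₀ ZMod 2) :=
          Finite.of_equiv _ Finsupp.equivFunOnFinite.symm
        haveI : Finite (Additive G) := Finite.of_equiv _ b.repr.toEquiv.symm
        exact not_finite (Additive G)
      obtain ⟨i, j, hij⟩ := (Infinite.instNontrivial _).exists_pair_ne
        (α := Module.Basis.ofVectorSpaceIndex (ZMod 2) (Additive G))
      let e := b.equiv b (Equiv.swap i j)
      refine ⟨{ toFun := fun g => (e (Additive.ofMul g)).toMul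
                invFun := fun g => (e.symm (Additive.ofMul g)).toMul
                left_inv := fun g => by simp
                right_inv := fun g => by simp
                map_mul' := fun x y => by
                  show ((e (Additive.ofMul x + Additive.ofMul y)).toMul) = _
                  rw [map_add]; rfl }, ?_⟩
      intro h
      have h1 : (e (b i)).toMul = (b i).toMul := congrFun h (b i).toMul
      have h2 : e (b i) = b j := by
        show (b.equiv b (Equiv.swap i j)) (b i) = b j
        rw [Module.Basis.equiv_apply, Equiv.swap_apply_left]
      rw [h2] at h1
      have : b j = b i := Additive.toMul.injective h1
      exact hij (b.injective this).symm
    · -- abelian with an element not of order ≤ 2: inversion is nontrivial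
      push_neg at hinv
      obtain ⟨x, hx⟩ := hinv
      refine ⟨{ toFun := fun g => g⁻¹
                invFun := fun g => g⁻¹
                left_inv := inv_inv
                right_inv := inv_inv
                map_mul' := fun a b => by
                  show (a * b)⁻¹ = a⁻¹ * b⁻¹
                  rw [mul_inv_rev, hcomm] }, ?_⟩
      intro h
      have hxx : x⁻¹ = x := congrFun h x
      apply hx
      calc x * x = x * x⁻¹ := by rw [hxx]
        _ = 1 := mul_inv_cancel x
  · -- nonabelian: conjugation by a noncentral element
    push_neg at hcomm
    obtain ⟨a, c, hac⟩ := hcomm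
    refine ⟨MulAut.conj a, ?_⟩
    intro h
    have := congrFun h c
    simp only [MulAut.conj_apply, id] at this
    apply hac
    calc a * c = a * c * a⁻¹ * a := by group
      _ = c * a := by rw [this]
end

section
/- Let P1 and P2 be confined planes and let f : F(P1) → F(P2) be an embedding of planes (an embedding of the associated geometric lattices) between their free projective extensions. Then f maps P1 into P2, i.e. the restriction of f to P1 takes points and lines of P1 to points and lines of P2. -/
/-- An incidence structure: points, lines, and an incidence relation. -/
structure IncGeom where
  Point : Type
  Line : Type
  I : Point → Line → Prop

namespace IncGeom

/-- The substructure induced on a set of points and a set of lines (a candidate subplane,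
with the induced incidence). -/
def restrict (G : IncGeom) (Sp : Set G.Point) (Sl : Set G.Line) : IncGeom :=
  ⟨Sp, Sl, fun p l => G.I p.1 l.1⟩

/-- `G` is a plane: every pair of distinct points determines a unique line; every pair of
distinct lines meets in at most one point; every line contains at least two points; and
there exist three non-collinear points. -/
def IsPlane (G : IncGeom) : Prop :=
  (∀ p q : G.Point, p ≠ q → ∃! l : G.Line, G.I p l ∧ G.I q l) ∧
  (∀ l l' : G.Line, l ≠ l' → ∀ p q : G.Point,
      G.I p l → G.I p l' → G.I q l → G.I q l' → p = q) ∧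
  (∀ l : G.Line, ∃ p q : G.Point, p ≠ q ∧ G.I p l ∧ G.I q l) ∧
  (∃ p q r : G.Point, p ≠ q ∧ p ≠ r ∧ q ≠ r ∧ ¬ ∃ l : G.Line, G.I p l ∧ G.I q l ∧ G.I r l)

/-- `G` is a finite confined plane: a finite plane in which every point is incident with at
least three lines and every line is non-trivial (contains at least three points). -/
def FinConfined (G : IncGeom) : Prop :=
  Finite G.Point ∧ Finite G.Line ∧ G.IsPlane ∧
  (∀ p : G.Point, ∃ l₁ l₂ l₃ : G.Line, l₁ ≠ l₂ ∧ l₁ ≠ l₃ ∧ l₂ ≠ l₃ ∧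
      G.I p l₁ ∧ G.I p l₂ ∧ G.I p l₃) ∧
  (∀ l : G.Line, ∃ p₁ p₂ p₃ : G.Point, p₁ ≠ p₂ ∧ p₁ ≠ p₃ ∧ p₂ ≠ p₃ ∧
      G.I p₁ l ∧ G.I p₂ l ∧ G.I p₃ l)

/-- `G` is confined: every point and every line of `G` lies in a finite confined subplane. -/
def Confined (G : IncGeom) : Prop :=
  (∀ p : G.Point, ∃ (Sp : Set G.Point) (Sl : Set G.Line),
      p ∈ Sp ∧ (G.restrict Sp Sl).FinConfined) ∧
  (∀ l : G.Line, ∃ (Sp : Set G.Point) (Sl : Set G.Line),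
      l ∈ Sl ∧ (G.restrict Sp Sl).FinConfined)

/-- `S` exhibits `G` as the free projective extension of the plane on the point set `S 0`
(with all lines of `G`): `G` is the union of the increasing chain `S n`, and `S (n + 1)` is
obtained from `S n` by adding, for every pair of distinct lines having no common point in
`S n`, exactly one new point incident with exactly those two lines (no new lines are ever
added). -/
def FreeExtChain (G : IncGeom) (S : ℕ → Set G.Point) : Prop :=
  (∀ n, S n ⊆ S (n + 1)) ∧
  (⋃ n, S n) = Set.univ ∧
  (∀ n, ∀ x ∈ S (n + 1) \ S n, ∃ l l' : G.Line, l ≠ l' ∧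
      (¬ ∃ p ∈ S n, G.I p l ∧ G.I p l') ∧ G.I x l ∧ G.I x l' ∧
      ∀ m : G.Line, G.I x m → m = l ∨ m = l') ∧
  (∀ n, ∀ l l' : G.Line, l ≠ l' → (¬ ∃ p ∈ S n, G.I p l ∧ G.I p l') →
      ∃! x : G.Point, x ∈ S (n + 1) \ S n ∧ G.I x l ∧ G.I x l')

/-- An embedding of incidence structures, phrased as an embedding of the associated
geometric lattices of length 3: injections on points and lines which preserve and reflect
incidence, send the join (`= 1`) of two points lying on no common line to `1` (the images
lie on no common line), and send the meet (`= 0`) of two lines with no common point to `0`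
(the images have no common point). Joins of distinct points lying on a common line and
meets of distinct lines with a common point are preserved by the incidence condition. -/
structure Emb (G G' : IncGeom) where
  fp : G.Point → G'.Point
  fl : G.Line → G'.Line
  fp_inj : Function.Injective fp
  fl_inj : Function.Injective fl
  incid_iff : ∀ p l, G.I p l ↔ G'.I (fp p) (fl l)
  join_top : ∀ p q : G.Point, p ≠ q → (¬ ∃ l, G.I p l ∧ G.I q l) →
      ¬ ∃ l', G'.I (fp p) l' ∧ G'.I (fp q) l'
  meet_bot : ∀ l m : G.Line, l ≠ m → (¬ ∃ p, G.I p l ∧ G.I p m) →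
      ¬ ∃ p', G'.I p' (fl l) ∧ G'.I p' (fl m)

end IncGeom

/-- **An embedding between free projective extensions of confined planes maps the base plane
into the base plane.** Let `Q₁ = F(P₁)` and `Q₂ = F(P₂)` be free projective extensions of
confined planes `P₁` (the restriction of `Q₁` to the points `S₁ 0`, with all lines) and
`P₂` (the restriction of `Q₂` to the points `S₂ 0`, with all lines). Then any embedding
`f : F(P₁) → F(P₂)` of the associated geometric lattices takes points of `P₁` to points of
`P₂` (and, trivially, lines of `P₁` to lines of `P₂`). -/
theorem embedding_of_free_extensions_restricts_to_base
    (Q₁ Q₂ : IncGeom) (S₁ : ℕ → Set Q₁.Point) (S₂ : ℕ → Set Q₂.Point)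
    (h₁plane : (Q₁.restrict (S₁ 0) Set.univ).IsPlane)
    (h₁conf : (Q₁.restrict (S₁ 0) Set.univ).Confined)
    (h₂plane : (Q₂.restrict (S₂ 0) Set.univ).IsPlane)
    (h₂conf : (Q₂.restrict (S₂ 0) Set.univ).Confined)
    (h₁free : Q₁.FreeExtChain S₁) (h₂free : Q₂.FreeExtChain S₂)
    (f : IncGeom.Emb Q₁ Q₂) :
    (∀ p ∈ S₁ 0, f.fp p ∈ S₂ 0) ∧
    (∀ l : Q₁.Line, f.fl l ∈ (Set.univ : Set Q₂.Line)) := by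

  classical
  refine ⟨?_, fun l => Set.mem_univ _⟩
  intro p hp
  -- Step 1: p is incident with at least three distinct lines of Q₁.
  obtain ⟨Sp, Sl, hmem, hfc⟩ := h₁conf.1 ⟨p, hp⟩
  obtain ⟨l₁, l₂, l₃, h12, h13, h23, hI1, hI2, hI3⟩ := hfc.2.2.2.1 ⟨⟨p, hp⟩, hmem⟩
  -- Underlying lines of Q₁
  set m₁ : Q₁.Line := l₁.1.1
  set m₂ : Q₁.Line := l₂.1.1
  set m₃ : Q₁.Line := l₃.1.1
  have hm12 : m₁ ≠ m₂ := fun h => h12 (Subtype.ext (Subtype.ext h))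
  have hm13 : m₁ ≠ m₃ := fun h => h13 (Subtype.ext (Subtype.ext h))
  have hm23 : m₂ ≠ m₃ := fun h => h23 (Subtype.ext (Subtype.ext h))
  have hQ1 : Q₁.I p m₁ := hI1
  have hQ2 : Q₁.I p m₂ := hI2
  have hQ3 : Q₁.I p m₃ := hI3
  -- images
  have hfm12 : f.fl m₁ ≠ f.fl m₂ := fun h => hm12 (f.fl_inj h)
  have hfm13 : f.fl m₁ ≠ f.fl m₃ := fun h => hm13 (f.fl_inj h)
  have hfm23 : f.fl m₂ ≠ f.fl m₃ := fun h => hm23 (f.fl_inj h)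
  have hF1 : Q₂.I (f.fp p) (f.fl m₁) := (f.incid_iff p m₁).1 hQ1
  have hF2 : Q₂.I (f.fp p) (f.fl m₂) := (f.incid_iff p m₂).1 hQ2
  have hF3 : Q₂.I (f.fp p) (f.fl m₃) := (f.incid_iff p m₃).1 hQ3
  -- Step 2: f.fp p lies in some S₂ n
  have hex : ∃ n, f.fp p ∈ S₂ n := by
    have := h₂free.2.1
    have : f.fp p ∈ ⋃ n, S₂ n := by rw [this]; exact Set.mem_univ _
    exact Set.mem_iUnion.1 this
  set n := Nat.find hex with hn
  have hmemn : f.fp p ∈ S₂ n := Nat.find_spec hex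
  rcases Nat.eq_zero_or_pos n with h0 | hposn
  · rwa [h0] at hmemn
  · exfalso
    obtain ⟨k, hk⟩ := Nat.exists_eq_add_of_lt hposn
    have hk' : n = k + 1 := by omega
    have hnot : f.fp p ∉ S₂ k := Nat.find_min hex (by omega)
    have hdiff : f.fp p ∈ S₂ (k + 1) \ S₂ k := ⟨hk' ▸ hmemn, hnot⟩
    obtain ⟨l, l', hne, _, _, _, hall⟩ := h₂free.2.2.1 k (f.fp p) hdiff
    rcases hall _ hF1 with h1 | h1 <;> rcases hall _ hF2 with h2 | h2 <;>
      rcases hall _ hF3 with h3 | h3 <;>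
      first
        | exact hfm12 (h1.trans h2.symm)
        | exact hfm13 (h1.trans h3.symm)
        | exact hfm23 (h2.trans h3.symm)
end
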